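/- Let κ be an infinite cardinal. Suppose G is a graph on a vertex set V of cardinality μ with chromatic number > κ, but every induced subgraph of G on fewer than λ vertices has chromatic number ≤ κ. Fix a well-ordering <* of V and define, for every ε < κ, the binary relation R_ε on V by: ν R_ε η iff {ν,η} is an edge of G and ν <* η (so all R_ε are equal). Then (V, ⟨R_ε : ε < κ⟩) witnesses Inc[μ,λ,κ]: (i) every B ⊆ V with |B| < λ is free, i.e., there exist a well-ordering <' of B and h : B → κ such that h(η)=h(ν) ∧ ν R_ζ η implies ν <' η, and for each η ∈ B the set {ζ < κ : ∃ ν <' η, ν R_ζ η, h(ν)=h(η)} has size < κ; and (ii) V itself is not strongly free: for some well-ordering of V, no h : V → κ makes all exceptional sets of size < κ. -/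

import Mathlib

open Cardinal

theorem stmt11 {V κ : Type u} [Infinite κ] (G : SimpleGraph V)
    (μ lam : Cardinal.{u}) (hμ : #V = μ)
    (hχ : ¬ ∃ c : V → κ, ∀ u v : V, G.Adj u v → c u ≠ c v)
    (hloc : ∀ B : Set V, #B < lam →
      ∃ c : B → κ, ∀ u v : B, G.Adj (u : V) (v : V) → c u ≠ c v)
    (r : V → V → Prop) (hr : IsWellOrder V r) :
    (∀ B : Set V, #B < lam →
      ∃ r' : B → B → Prop, IsWellOrder B r' ∧ ∃ h : B → κ,
        (∀ η ν : B, h η = h ν →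
          (G.Adj (ν : V) (η : V) ∧ r (ν : V) (η : V)) → r' ν η) ∧
        ∀ η : B, #{ζ : κ | ∃ ν : B, r' ν η ∧
          (G.Adj (ν : V) (η : V) ∧ r (ν : V) (η : V)) ∧ h ν = h η} < #κ) ∧
    (∃ r'' : V → V → Prop, IsWellOrder V r'' ∧ ∀ h : V → κ, ∃ η : V,
      ¬ #{ζ : κ | ∃ ν : V, r'' ν η ∧ (G.Adj ν η ∧ r ν η) ∧ h ν = h η} < #κ) := by
  constructor
  · intro B hB
    obtain ⟨c, hc⟩ := hloc B hB
    refine ⟨fun a b => r (a : V) (b : V), ?_, c, ?_, ?_⟩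
    · exact RelEmbedding.isWellOrder (Subrel.relEmbedding r B)
    · intro η ν hne ⟨hadj, _⟩
      exact absurd hne.symm (hc ν η hadj)
    · intro η
      have : {ζ : κ | ∃ ν : B, r (ν : V) (η : V) ∧
          (G.Adj (ν : V) (η : V) ∧ r (ν : V) (η : V)) ∧ c ν = c η} = ∅ := by
        ext ζ
        simp only [Set.mem_setOf_eq, Set.mem_empty_iff_false, iff_false]
        rintro ⟨ν, _, ⟨hadj, _⟩, hcc⟩
        exact hc ν η hadj hcc
      rw [this]
      simpa using Cardinal.aleph0_pos.trans_le (Cardinal.aleph0_le_mk κ)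
  · refine ⟨r, hr, fun h => ?_⟩
    by_contra hcon
    push_neg at hcon
    apply hχ
    refine ⟨h, fun u v hadj hhe => ?_⟩
    have hne : u ≠ v := hadj.ne
    rcases (haveI := hr; trichotomous_of r u v) with hr1 | he | hr2
    · have := hcon v
      have hmem : {ζ : κ | ∃ ν : V, r ν v ∧ (G.Adj ν v ∧ r ν v) ∧ h ν = h v} =
          Set.univ := by
        ext ζ
        simp only [Set.mem_setOf_eq, Set.mem_univ, iff_true]
        exact ⟨u, hr1, ⟨hadj, hr1⟩, hhe⟩
      rw [hmem, Cardinal.mk_univ] at this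
      exact lt_irrefl _ this
    · exact hne he
    · have := hcon u
      have hmem : {ζ : κ | ∃ ν : V, r ν u ∧ (G.Adj ν u ∧ r ν u) ∧ h ν = h u} =
          Set.univ := by
        ext ζ
        simp only [Set.mem_setOf_eq, Set.mem_univ, iff_true]
        exact ⟨v, hr2, ⟨hadj.symm, hr2⟩, hhe.symm⟩
      rw [hmem, Cardinal.mk_univ] at this
      exact lt_irrefl _ this
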